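/- Let s be a permutation of ℕ and X a finite subset of ℕ. Then for any permutations a₁, …, a_k of ℕ, each having infinite support, and any nonzero integers α₁, …, α_k, there exists a permutation t of ℕ such that t(x) = s(x) for all x ∈ X and the permutation a_k ∘ t^{α_k} ∘ ⋯ ∘ a₁ ∘ t^{α₁} is not the identity, i.e., it moves some n ∈ ℕ. -/

import Mathlib

lemma extend_partial (L : List (ℕ × ℕ)) (h1 : (L.map Prod.fst).Nodup)
    (h2 : (L.map Prod.snd).Nodup) :
    ∃ t : Equiv.Perm ℕ, ∀ q ∈ L, t q.1 = q.2 := by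
  induction L with
  | nil => exact ⟨1, by simp⟩
  | cons a L ih =>
    simp only [List.map_cons, List.nodup_cons] at h1 h2
    obtain ⟨t, ht⟩ := ih h1.2 h2.2
    refine ⟨Equiv.swap (t a.1) a.2 * t, ?_⟩
    rintro q hq
    rcases List.mem_cons.mp hq with rfl | hq
    · simp [Equiv.Perm.mul_apply]
    · have h3 : t q.1 = q.2 := ht q hq
      have h4 : q.2 ≠ t a.1 := by
        intro h
        exact h1.1 (by
          have := t.injective (h3.trans h)
          rw [← this]
          exact List.mem_map_of_mem hq)
      have h5 : q.2 ≠ a.2 := by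
        intro h
        exact h2.1 (h ▸ List.mem_map_of_mem (f := Prod.snd) hq)
      simp [Equiv.Perm.mul_apply, h3, Equiv.swap_apply_of_ne_of_ne h4 h5]


lemma chain_step (b : Equiv.Perm ℕ) (hb : {n : ℕ | b n ≠ n}.Infinite) (β : ℤ) (hβ : β ≠ 0)
    (L₀ : List (ℕ × ℕ)) (c : ℕ) (h1 : (L₀.map Prod.fst).Nodup) (h2 : (L₀.map Prod.snd).Nodup)
    (hc1 : c ∉ L₀.map Prod.fst) (hc2 : c ∉ L₀.map Prod.snd) :
    ∃ L₁ : List (ℕ × ℕ), (∀ q ∈ L₀, q ∈ L₁) ∧ (L₁.map Prod.fst).Nodup ∧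
      (L₁.map Prod.snd).Nodup ∧ (c ∈ L₁.map Prod.fst ∨ c ∈ L₁.map Prod.snd) ∧
      ∃ c', c' ∉ L₁.map Prod.fst ∧ c' ∉ L₁.map Prod.snd ∧
        ∀ t : Equiv.Perm ℕ, (∀ q ∈ L₁, t q.1 = q.2) → b ((t ^ β) c) = c' := by
  classical
  set m := β.natAbs with hmdef
  have hm : 0 < m := Int.natAbs_pos.mpr hβ
  set F : Finset ℕ := (L₀.map Prod.fst).toFinset ∪ (L₀.map Prod.snd).toFinset ∪ {c} with hF
  have hfstF : ∀ u, u ∈ L₀.map Prod.fst → u ∈ F := by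
    intro u hu; simp [hF, List.mem_toFinset.mpr hu]
  have hsndF : ∀ u, u ∈ L₀.map Prod.snd → u ∈ F := by
    intro u hu; simp [hF, List.mem_toFinset.mpr hu]
  have hcF : c ∈ F := by simp [hF]
  -- choose p
  have hpre : (⇑b ⁻¹' (↑F : Set ℕ)).Finite := F.finite_toSet.preimage b.injective.injOn
  have hinf : ({n : ℕ | b n ≠ n} \ ((↑F : Set ℕ) ∪ ⇑b ⁻¹' ↑F)).Infinite :=
    hb.diff ((F.finite_toSet.union hpre).subset (by simp))
  obtain ⟨p, hp⟩ := hinf.nonempty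
  obtain ⟨hpsupp, hpF, hbpF⟩ : b p ≠ p ∧ p ∉ F ∧ b p ∉ F := by
    obtain ⟨h1', h2'⟩ := hp
    simp only [Set.mem_union, Set.mem_preimage, Finset.mem_coe, not_or] at h2'
    exact ⟨h1', h2'.1, h2'.2⟩
  -- fresh region
  set N : ℕ := F.sup id + p + b p + 1 with hN
  have hNF : ∀ u ∈ F, u < N := fun u hu => by
    have := Finset.le_sup (f := id) hu; simp only [id] at this; omega
  have hpN : p < N := by omega
  have hbpN : b p < N := by omega
  -- the chain points
  set x : ℕ → ℕ := fun j => if j = 0 then c else if j = m then p else N + j with hx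
  have hx0 : x 0 = c := by simp [hx]
  have hxm : x m = p := by simp [hx, hm.ne']
  have hxmid : ∀ j, j ≠ 0 → j ≠ m → x j = N + j := fun j hj hj' => by simp [hx, hj, hj']
  have hcp : c ≠ p := fun h => hpF (h ▸ hcF)
  have hcN : c < N := hNF c hcF
  have hxinj : ∀ i ≤ m, ∀ j ≤ m, x i = x j → i = j := by
    intro i hi j hj hij
    rcases eq_or_ne i 0 with rfl | hi0 <;> rcases eq_or_ne j 0 with rfl | hj0
    · rfl
    · rcases eq_or_ne j m with rfl | hjm
      · exact absurd (hx0 ▸ hxm ▸ hij) hcp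
      · rw [hx0, hxmid j hj0 hjm] at hij; omega
    · rcases eq_or_ne i m with rfl | him
      · exact absurd (hx0 ▸ hxm ▸ hij).symm hcp
      · rw [hx0, hxmid i hi0 him] at hij; omega
    · rcases eq_or_ne i m with rfl | him <;> rcases eq_or_ne j m with rfl | hjm
      · rfl
      · rw [hxm, hxmid j hj0 hjm] at hij; omega
      · rw [hxm, hxmid i hi0 him] at hij; omega
      · rw [hxmid i hi0 him, hxmid j hj0 hjm] at hij; omega
  have hxF : ∀ j, 1 ≤ j → j ≤ m → x j ∉ F := by
    intro j hj1 hjm hmem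
    rcases eq_or_ne j m with rfl | hjm'
    · exact hpF (hxm ▸ hmem)
    · have := hNF _ hmem
      rw [hxmid j (by omega) hjm'] at this; omega
  have hxfst : ∀ j ≤ m, x j ∉ L₀.map Prod.fst := by
    intro j hj hmem
    rcases eq_or_ne j 0 with rfl | hj0
    · exact hc1 (hx0 ▸ hmem)
    · exact hxF j (by omega) hj (hfstF _ hmem)
  have hxsnd : ∀ j ≤ m, x j ∉ L₀.map Prod.snd := by
    intro j hj hmem
    rcases eq_or_ne j 0 with rfl | hj0
    · exact hc2 (hx0 ▸ hmem)
    · exact hxF j (by omega) hj (hsndF _ hmem)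
  -- the chain
  set chain : List (ℕ × ℕ) :=
    (List.range m).map (fun j => if 0 < β then (x j, x (j + 1)) else (x (j + 1), x j)) with hchain
  refine ⟨L₀ ++ chain, fun q hq => List.mem_append_left _ hq, ?_, ?_, ?_, b p, ?_, ?_, ?_⟩
  · -- fst nodup
    rw [List.map_append, List.nodup_append]
    refine ⟨h1, ?_, ?_⟩
    · rw [hchain, List.map_map]
      refine (List.nodup_range : (List.range m).Nodup).map_on ?_
      intro i hi j hj hij
      simp only [List.mem_range] at hi hj
      by_cases hβ' : 0 < β <;> simp only [Function.comp, hβ', if_pos, if_neg, if_true, if_false] at hij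
      · exact hxinj i (by omega) j (by omega) hij
      · have := hxinj (i+1) (by omega) (j+1) (by omega) hij; omega
    · intro u hu _ hu' rfl
      rw [hchain, List.map_map] at hu'
      obtain ⟨j, hj, hju⟩ := List.mem_map.mp hu'
      simp only [List.mem_range] at hj
      by_cases hβ' : 0 < β <;> simp only [Function.comp, hβ', if_true, if_false, if_pos, if_neg] at hju
      · exact hxfst j (by omega) (hju ▸ hu)
      · exact hxfst (j+1) (by omega) (hju ▸ hu)
  · -- snd nodup
    rw [List.map_append, List.nodup_append]
    refine ⟨h2, ?_, ?_⟩
    · rw [hchain, List.map_map]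
      refine (List.nodup_range : (List.range m).Nodup).map_on ?_
      intro i hi j hj hij
      simp only [List.mem_range] at hi hj
      by_cases hβ' : 0 < β <;> simp only [Function.comp, hβ', if_true, if_false, if_pos, if_neg] at hij
      · have := hxinj (i+1) (by omega) (j+1) (by omega) hij; omega
      · exact hxinj i (by omega) j (by omega) hij
    · intro u hu _ hu' rfl
      rw [hchain, List.map_map] at hu'
      obtain ⟨j, hj, hju⟩ := List.mem_map.mp hu'
      simp only [List.mem_range] at hj
      by_cases hβ' : 0 < β <;> simp only [Function.comp, hβ', if_true, if_false, if_pos, if_neg] at hju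
      · exact hxsnd (j+1) (by omega) (hju ▸ hu)
      · exact hxsnd j (by omega) (hju ▸ hu)
  · -- c in fst or snd
    have h0 : (if 0 < β then (x 0, x 1) else (x 1, x 0)) ∈ chain := by
      rw [hchain]
      exact List.mem_map.mpr ⟨0, List.mem_range.mpr hm, rfl⟩
    by_cases hβ' : 0 < β
    · left
      rw [List.map_append]
      refine List.mem_append_right _ ?_
      rw [if_pos hβ'] at h0
      exact hx0 ▸ List.mem_map.mpr ⟨_, h0, rfl⟩
    · right
      rw [List.map_append]
      refine List.mem_append_right _ ?_
      rw [if_neg hβ'] at h0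
      exact hx0 ▸ List.mem_map.mpr ⟨_, h0, rfl⟩
  · -- b p not in fst
    rw [List.map_append]
    intro hmem
    rcases List.mem_append.mp hmem with h | h
    · exact hbpF (hfstF _ h)
    · rw [hchain, List.map_map] at h
      obtain ⟨j, hj, hju⟩ := List.mem_map.mp h
      simp only [List.mem_range] at hj
      have key : ∀ i ≤ m, x i ≠ b p := by
        intro i hi h'
        rcases eq_or_ne i 0 with rfl | hi0
        · exact hbpF ((hx0.symm.trans h') ▸ hcF)
        · rcases eq_or_ne i m with rfl | him
          · exact hpsupp (hxm.symm.trans h').symm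
          · rw [hxmid i hi0 him] at h'; omega
      by_cases hβ' : 0 < β <;> simp only [Function.comp, hβ', if_true, if_false, if_pos, if_neg] at hju
      · exact key j (by omega) hju
      · exact key (j+1) (by omega) hju
  · -- b p not in snd
    rw [List.map_append]
    intro hmem
    rcases List.mem_append.mp hmem with h | h
    · exact hbpF (hsndF _ h)
    · rw [hchain, List.map_map] at h
      obtain ⟨j, hj, hju⟩ := List.mem_map.mp h
      simp only [List.mem_range] at hj
      have key : ∀ i ≤ m, x i ≠ b p := by
        intro i hi h'
        rcases eq_or_ne i 0 with rfl | hi0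
        · exact hbpF ((hx0.symm.trans h') ▸ hcF)
        · rcases eq_or_ne i m with rfl | him
          · exact hpsupp (hxm.symm.trans h').symm
          · rw [hxmid i hi0 him] at h'; omega
      by_cases hβ' : 0 < β <;> simp only [Function.comp, hβ', if_true, if_false, if_pos, if_neg] at hju
      · exact key (j+1) (by omega) hju
      · exact key j (by omega) hju
  · -- the evaluation
    intro t ht
    have hchainmem : ∀ j < m, (if 0 < β then (x j, x (j+1)) else (x (j+1), x j)) ∈ L₀ ++ chain := by
      intro j hj
      exact List.mem_append_right _ (List.mem_map.mpr ⟨j, List.mem_range.mpr hj, rfl⟩)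
    suffices h : (t ^ β) c = p by rw [h]
    by_cases hβ' : 0 < β
    · have hβm : β = (m : ℤ) := by omega
      have step : ∀ j ≤ m, (t ^ j) c = x j := by
        intro j hj
        induction j with
        | zero => simp [hx0]
        | succ j ih =>
          have hpair := ht _ (hchainmem j (by omega))
          rw [if_pos hβ'] at hpair
          rw [pow_succ', Equiv.Perm.mul_apply, ih (by omega), hpair]
      rw [hβm, zpow_natCast, step m le_rfl, hxm]
    · have hβm : β = -(m : ℤ) := by omega
      have step : ∀ j ≤ m, ((t⁻¹) ^ j) c = x j := by
        intro j hj
        induction j with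
        | zero => simp [hx0]
        | succ j ih =>
          have hpair := ht _ (hchainmem j (by omega))
          rw [if_neg hβ'] at hpair
          have : t⁻¹ (x j) = x (j + 1) := by
            rw [Equiv.Perm.inv_def, Equiv.symm_apply_eq]
            exact hpair.symm
          rw [pow_succ', Equiv.Perm.mul_apply, ih (by omega), this]
      rw [hβm, zpow_neg, zpow_natCast, ← inv_pow, step m le_rfl, hxm]



lemma build_word (r : List (Equiv.Perm ℕ × ℤ))
    (hr : ∀ q ∈ r, {n : ℕ | q.1 n ≠ n}.Infinite ∧ q.2 ≠ 0) :
    ∀ (L₀ : List (ℕ × ℕ)) (c : ℕ), (L₀.map Prod.fst).Nodup → (L₀.map Prod.snd).Nodup →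
      c ∉ L₀.map Prod.fst → c ∉ L₀.map Prod.snd →
      ∃ L : List (ℕ × ℕ), (∀ q ∈ L₀, q ∈ L) ∧ (L.map Prod.fst).Nodup ∧
        (L.map Prod.snd).Nodup ∧
        ∃ d, d ∉ L.map Prod.fst ∧ d ∉ L.map Prod.snd ∧
          (r ≠ [] → c ∈ L.map Prod.fst ∨ c ∈ L.map Prod.snd) ∧
          ∀ t : Equiv.Perm ℕ, (∀ q ∈ L, t q.1 = q.2) →
            (r.reverse.map fun q => q.1 * t ^ q.2).prod c = d := by
  induction r with
  | nil =>
    intro L₀ c h1 h2 hc1 hc2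
    exact ⟨L₀, fun q hq => hq, h1, h2, c, hc1, hc2, fun h => absurd rfl h, fun t _ => by simp⟩
  | cons q r ih =>
    intro L₀ c h1 h2 hc1 hc2
    obtain ⟨L₁, hsub₁, h1₁, h2₁, hcin, c', hc'1, hc'2, hc'eval⟩ :=
      chain_step q.1 (hr q List.mem_cons_self).1 q.2 (hr q List.mem_cons_self).2
        L₀ c h1 h2 hc1 hc2
    obtain ⟨L, hsub, hL1, hL2, d, hd1, hd2, _, heval⟩ :=
      ih (fun p hp => hr p (List.mem_cons_of_mem _ hp)) L₁ c' h1₁ h2₁ hc'1 hc'2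
    refine ⟨L, fun p hp => hsub _ (hsub₁ _ hp), hL1, hL2, d, hd1, hd2, ?_, ?_⟩
    · intro _
      rcases hcin with h | h
      · left
        obtain ⟨u, hu, hu'⟩ := List.mem_map.mp h
        exact List.mem_map.mpr ⟨u, hsub _ hu, hu'⟩
      · right
        obtain ⟨u, hu, hu'⟩ := List.mem_map.mp h
        exact List.mem_map.mpr ⟨u, hsub _ hu, hu'⟩
    · intro t ht
      have hext : ∀ p ∈ L₁, t p.1 = p.2 := fun p hp => ht p (hsub _ hp)
      rw [List.reverse_cons, List.map_append, List.prod_append]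
      simp only [List.map_cons, List.map_nil, List.prod_cons, List.prod_nil, mul_one,
        Equiv.Perm.mul_apply]
      rw [hc'eval t hext]
      exact heval t ht


theorem exists_perm_agreeing_and_nontrivial_product
    (s : Equiv.Perm ℕ) (X : Finset ℕ) (k : ℕ) (hk : 0 < k)
    (a : Fin k → Equiv.Perm ℕ) (ha : ∀ i, {n : ℕ | a i n ≠ n}.Infinite)
    (α : Fin k → ℤ) (hα : ∀ i, α i ≠ 0) :
    ∃ t : Equiv.Perm ℕ, (∀ x ∈ X, t x = s x) ∧
      ∃ n : ℕ, (List.ofFn fun i : Fin k => a i.rev * t ^ α i.rev).prod n ≠ n := by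
  classical
  set L₀ : List (ℕ × ℕ) := X.toList.map (fun x => (x, s x)) with hL₀
  have hfst : L₀.map Prod.fst = X.toList := by
    simp [hL₀, List.map_map, Function.comp_def]
  have hsnd : L₀.map Prod.snd = X.toList.map (fun x => s x) := by
    simp [hL₀, List.map_map, Function.comp_def]
  have h1 : (L₀.map Prod.fst).Nodup := hfst ▸ X.nodup_toList
  have h2 : (L₀.map Prod.snd).Nodup :=
    hsnd ▸ X.nodup_toList.map (fun x y h => s.injective h)
  -- a fresh starting point
  set B : Finset ℕ := X ∪ X.image (fun x => s x) with hB
  set n₀ : ℕ := B.sup id + 1 with hn₀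
  have hn₀B : n₀ ∉ B := by
    intro h
    have := Finset.le_sup (f := id) h
    simp only [id] at this
    omega
  have hc1 : n₀ ∉ L₀.map Prod.fst := by
    rw [hfst]
    intro h
    exact hn₀B (by simp [hB, Finset.mem_toList.mp (by exact_mod_cast h)])
  have hc2 : n₀ ∉ L₀.map Prod.snd := by
    rw [hsnd]
    intro h
    obtain ⟨u, hu, hu'⟩ := List.mem_map.mp h
    exact hn₀B (by
      rw [hB, Finset.mem_union]
      exact Or.inr (Finset.mem_image.mpr ⟨u, Finset.mem_toList.mp hu, hu'⟩))
  set r : List (Equiv.Perm ℕ × ℤ) := List.ofFn (fun i => (a i, α i)) with hr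
  have hrprop : ∀ q ∈ r, {n : ℕ | q.1 n ≠ n}.Infinite ∧ q.2 ≠ 0 := by
    intro q hq
    obtain ⟨i, hi⟩ := List.mem_ofFn.mp hq
    exact hi ▸ ⟨ha i, hα i⟩
  obtain ⟨L, hsub, hL1, hL2, d, hd1, hd2, hcin, heval⟩ :=
    build_word r hrprop L₀ n₀ h1 h2 hc1 hc2
  obtain ⟨t, ht⟩ := extend_partial L hL1 hL2
  have hrne : r ≠ [] := by
    intro h
    have : r.length = k := by simp [hr]
    rw [h] at this
    simp at this
    omega
  refine ⟨t, ?_, n₀, ?_⟩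
  · intro x hx
    exact ht (x, s x) (hsub _ (List.mem_map_of_mem (f := fun x => (x, s x)) (Finset.mem_toList.mpr hx)))
  · have hlist : (List.ofFn fun i : Fin k => a i.rev * t ^ α i.rev)
        = r.reverse.map fun q => q.1 * t ^ q.2 := by
      rw [hr, List.map_reverse, List.map_ofFn]
      apply List.ext_getElem
      · simp
      · intro i hi hi'
        simp only [List.getElem_ofFn, List.getElem_reverse, List.getElem_ofFn, Function.comp]
        congr 2 <;> · congr 1; ext; simp [Fin.rev]; omega
    rw [hlist, heval t ht]
    intro h
    rcases hcin hrne with hmem | hmem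
    · exact hd1 (h ▸ hmem)
    · exact hd2 (h ▸ hmem)
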